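/- Let N_d and N_p be coprime positive integers with |N_p − N_d| ≥ 2. Then for every real inclination i, the relative trajectory p is not injective on [0,1), both in the prograde rotating frame and in the retrograde rotating frame. In other words, N_p = N_d − 1 or N_p = N_d + 1 is a necessary condition for a non-self-intersecting relative trajectory. -/

import Mathlib

open Real

section Aux

private lemma emod_one_of_window' (K S : ℤ) (hS : 3 ≤ S)
    (h : ∀ j : ℤ, 1 ≤ j → j ≤ S - 1 → 0 < (j*K) % (2*S) ∧ (j*K) % (2*S) < S) :
    K % (2*S) = 1 := by
  have h2S : (0:ℤ) < 2*S := by omega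
  have hstep : ∀ j : ℤ, 1 ≤ j → j ≤ S - 2 →
      ((j+1)*K) % (2*S) = (j*K) % (2*S) + K % (2*S) := by
    intro j hj1 hj2
    have d1 : (2*S) ∣ ((j+1)*K - ((j+1)*K) % (2*S)) := Int.dvd_self_sub_of_emod_eq rfl
    have d2 : (2*S) ∣ (j*K - (j*K) % (2*S)) := Int.dvd_self_sub_of_emod_eq rfl
    have d3 : (2*S) ∣ (K - K % (2*S)) := Int.dvd_self_sub_of_emod_eq rfl
    have dd : (2*S) ∣ (((j+1)*K) % (2*S) - (j*K) % (2*S) - K % (2*S)) := by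
      have := (d2.add d3).sub d1
      have e : (j*K - (j*K) % (2*S)) + (K - K % (2*S)) - ((j+1)*K - ((j+1)*K) % (2*S))
          = ((j+1)*K) % (2*S) - (j*K) % (2*S) - K % (2*S) := by ring
      rwa [e] at this
    have b1 := h (j+1) (by omega) (by omega)
    have b2 := h j (by omega) (by omega)
    have b3 := h 1 (by omega) (by omega)
    have b3' : 0 < K % (2*S) ∧ K % (2*S) < S := by simpa using b3
    have := Int.eq_zero_of_abs_lt_dvd dd (by rw [abs_lt]; omega)
    omega
  have hmul : ∀ j : ℤ, 1 ≤ j → j ≤ S - 1 → (j*K) % (2*S) = j * (K % (2*S)) := by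
    have H := Int.le_induction (m := 1)
      (motive := fun j _ => j ≤ S - 1 → (j*K) % (2*S) = j * (K % (2*S)))
      (by intro _; norm_num)
      (by intro j hj ih hj2
          rw [hstep j hj (by omega), ih (by omega)]; ring)
    exact fun j hj => H j hj
  have hv1 := h 1 (by omega) (by omega)
  have hv1' : 0 < K % (2*S) ∧ K % (2*S) < S := by simpa using hv1
  have hlast := h (S-1) (by omega) (by omega)
  rw [hmul (S-1) (by omega) (by omega)] at hlast
  nlinarith [hv1'.1, hlast.2]

private lemma sin_eq_emod' (S : ℤ) (hS : 0 < S) (a : ℤ) :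
    Real.sin (π * a / S) = Real.sin (π * ((a % (2*S) : ℤ) : ℝ) / S) := by
  have hS' : (S:ℝ) ≠ 0 := by exact_mod_cast hS.ne'
  have e : (a:ℝ) = ((a % (2*S) : ℤ) : ℝ) + 2*(S:ℝ)*((a / (2*S) : ℤ) : ℝ) := by
    exact_mod_cast congrArg (fun z : ℤ => (z:ℝ)) (Int.emod_add_mul_ediv a (2*S)).symm
  have : π * a / S = π * ((a % (2*S) : ℤ) : ℝ) / S + ((a / (2*S) : ℤ) : ℝ) * (2 * π) := by
    rw [e]; field_simp
  rw [this]
  exact_mod_cast Real.sin_add_int_mul_two_pi _ (a / (2*S))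

private lemma sin_pos_iff_emod' (S : ℤ) (hS : 0 < S) (a : ℤ) :
    0 < Real.sin (π * a / S) ↔ (0 < a % (2*S) ∧ a % (2*S) < S) := by
  have hS' : (0:ℝ) < (S:ℝ) := by exact_mod_cast hS
  rw [sin_eq_emod' S hS a]
  have hv0 : 0 ≤ a % (2*S) := Int.emod_nonneg a (by omega)
  have hv2 : a % (2*S) < 2*S := Int.emod_lt_of_pos a (by omega)
  generalize a % (2*S) = v at hv0 hv2 ⊢
  constructor
  · intro hpos
    by_contra hcon
    push_neg at hcon
    rcases le_or_gt v 0 with h0 | h1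
    · have hz : v = 0 := le_antisymm h0 hv0
      rw [hz] at hpos; simp at hpos
    · have hSv := hcon h1
      rcases eq_or_lt_of_le hSv with he | hlt
      · rw [← he] at hpos
        rw [mul_div_assoc, div_self hS'.ne', mul_one, Real.sin_pi] at hpos
        exact lt_irrefl 0 hpos
      · have hneg : Real.sin (π * (v:ℝ) / S) < 0 := by
          have e2 : π * (v:ℝ) / S = π * ((v:ℝ) - S) / S + π := by field_simp; ring
          rw [e2, Real.sin_add_pi]
          have h1' : 0 < Real.sin (π * ((v:ℝ) - S) / S) := by
            apply Real.sin_pos_of_pos_of_lt_pi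
            · have hvS : (S:ℝ) < (v:ℝ) := by exact_mod_cast hlt
              have : (0:ℝ) < (v:ℝ) - S := by linarith
              positivity
            · rw [div_lt_iff₀ hS']
              have : (v:ℝ) < 2*S := by exact_mod_cast hv2
              nlinarith [Real.pi_pos]
          linarith
        linarith
  · rintro ⟨h1, h2⟩
    apply Real.sin_pos_of_pos_of_lt_pi
    · have h1' : (0:ℝ) < (v:ℝ) := by exact_mod_cast h1
      positivity
    · rw [div_lt_iff₀ hS']
      have : (v:ℝ) < S := by exact_mod_cast h2
      nlinarith [Real.pi_pos]

private lemma eq_one_of_emod' (K S : ℤ) (hKS : |K| ≤ S - 1)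
    (h : K % (2*S) = 1) : K = 1 := by
  have d : (2*S) ∣ (K - 1) := by
    have := Int.dvd_self_sub_of_emod_eq h
    simpa using this
  have := Int.eq_zero_of_abs_lt_dvd d (by rw [abs_le] at hKS; rw [abs_lt]; omega)
  omega

private lemma exists_sign_change' (K S : ℤ) (hS : 3 ≤ S) (hK2 : 2 ≤ |K|) (hKS : |K| ≤ S - 1) :
    ∃ j : ℤ, 1 ≤ j ∧ j + 1 ≤ S - 1 ∧
      Real.sin (π * ((j*K : ℤ) : ℝ) / S) * Real.sin (π * (((j+1)*K : ℤ) : ℝ) / S) ≤ 0 := by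
  by_contra hcon
  push_neg at hcon
  set s : ℤ → ℝ := fun j => Real.sin (π * ((j*K : ℤ) : ℝ) / S) with hs
  have hP : ∀ j : ℤ, 1 ≤ j → j + 1 ≤ S - 1 → 0 < s j * s (j+1) := hcon
  have hs1 : s 1 ≠ 0 := by
    have := hP 1 (le_refl 1) (by omega)
    intro h0; rw [h0] at this; simp at this
  have hSpos : (0:ℤ) < S := by omega
  rcases lt_or_gt_of_ne hs1 with hneg | hpos
  · have hall : ∀ j : ℤ, 1 ≤ j → j ≤ S - 1 → s j < 0 := by
      have H := Int.le_induction (m := 1)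
        (motive := fun j _ => j ≤ S - 1 → s j < 0)
        (fun _ => hneg)
        (by intro j hj ih hj2
            have hprod := hP j hj (by omega)
            have hsj := ih (by omega)
            nlinarith)
      exact fun j hj => H j hj
    have hwin : ∀ j : ℤ, 1 ≤ j → j ≤ S - 1 →
        0 < (j*(-K)) % (2*S) ∧ (j*(-K)) % (2*S) < S := by
      intro j hj1 hj2
      have := hall j hj1 hj2
      rw [← sin_pos_iff_emod' S hSpos (j*(-K))]
      have e : π * ((j*(-K) : ℤ) : ℝ) / S = -(π * ((j*K : ℤ) : ℝ) / S) := by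
        push_cast; ring
      rw [e, Real.sin_neg]
      simpa [hs] using this
    have := eq_one_of_emod' (-K) S (by rw [abs_neg]; exact hKS)
      (emod_one_of_window' (-K) S hS hwin)
    rw [abs_le] at hKS; rw [le_abs] at hK2; omega
  · have hall : ∀ j : ℤ, 1 ≤ j → j ≤ S - 1 → 0 < s j := by
      have H := Int.le_induction (m := 1)
        (motive := fun j _ => j ≤ S - 1 → 0 < s j)
        (fun _ => hpos)
        (by intro j hj ih hj2
            have hprod := hP j hj (by omega)
            have hsj := ih (by omega)
            nlinarith)
      exact fun j hj => H j hj
    have hwin : ∀ j : ℤ, 1 ≤ j → j ≤ S - 1 →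
        0 < (j*K) % (2*S) ∧ (j*K) % (2*S) < S := by
      intro j hj1 hj2
      rw [← sin_pos_iff_emod' S hSpos (j*K)]
      exact hall j hj1 hj2
    have := eq_one_of_emod' K S hKS (emod_one_of_window' K S hS hwin)
    rw [le_abs] at hK2; omega

private lemma exists_zero_in_half' (α β : ℝ) (K S : ℤ) (hS : 3 ≤ S) (hK2 : 2 ≤ |K|)
    (hKS : |K| ≤ S - 1) :
    ∃ t : ℝ, 0 < t ∧ t < 1/2 ∧
      α * Real.sin (2*π*(K:ℝ)*t) + β * Real.sin (2*π*(S:ℝ)*t) = 0 := by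
  obtain ⟨j, hj1, hj2, hsc⟩ := exists_sign_change' K S hS hK2 hKS
  have hSr : (0:ℝ) < (S:ℝ) := by exact_mod_cast (by omega : (0:ℤ) < S)
  set f : ℝ → ℝ := fun t => α * Real.sin (2*π*(K:ℝ)*t) + β * Real.sin (2*π*(S:ℝ)*t) with hf
  have hcont : Continuous f := by fun_prop
  have hval : ∀ m : ℤ, f ((m:ℝ)/(2*S)) = α * Real.sin (π * ((m*K : ℤ) : ℝ) / S) := by
    intro m
    have e1 : 2*π*(K:ℝ)*((m:ℝ)/(2*S)) = π * ((m*K : ℤ) : ℝ) / S := by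
      push_cast; field_simp
    have e2 : 2*π*(S:ℝ)*((m:ℝ)/(2*S)) = (m:ℝ) * π := by
      field_simp
    rw [hf]; simp only
    rw [e1, e2]
    rw [Real.sin_int_mul_pi]
    ring
  set a : ℝ := (j:ℝ)/(2*S) with ha
  set b : ℝ := ((j+1:ℤ):ℝ)/(2*S) with hb
  have hab : a ≤ b := by
    rw [ha, hb]
    gcongr
    · push_cast; linarith
  have hfab : f a * f b ≤ 0 := by
    rw [hval j, hval (j+1)]
    nlinarith [hsc, sq_nonneg α]
  have hzero : ∃ t ∈ Set.Icc a b, f t = 0 := by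
    rcases mul_nonpos_iff.mp hfab with ⟨h1, h2⟩ | ⟨h1, h2⟩
    · have := intermediate_value_Icc' hab hcont.continuousOn
      have h0 : (0:ℝ) ∈ Set.Icc (f b) (f a) := ⟨h2, h1⟩
      obtain ⟨t, ht, hft⟩ := this h0
      exact ⟨t, ht, hft⟩
    · have := intermediate_value_Icc hab hcont.continuousOn
      have h0 : (0:ℝ) ∈ Set.Icc (f a) (f b) := ⟨h1, h2⟩
      obtain ⟨t, ht, hft⟩ := this h0
      exact ⟨t, ht, hft⟩
  obtain ⟨t, ⟨hta, htb⟩, hft⟩ := hzero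
  refine ⟨t, ?_, ?_, hft⟩
  · have h0a : 0 < a := by
      rw [ha]
      apply div_pos
      · exact_mod_cast (by omega : (0:ℤ) < j)
      · linarith
    linarith
  · have hbh : b < 1/2 := by
      rw [hb, div_lt_iff₀ (by linarith)]
      have : ((j+1 : ℤ):ℝ) ≤ ((S:ℝ) - 1) := by
        push_cast
        have : (j:ℝ) + 1 + 1 ≤ (S:ℝ) := by exact_mod_cast (by omega : j + 1 + 1 ≤ S)
        linarith
      linarith
    linarith

end Aux

/-- The relative trajectory in a prograde rotating frame: ascending node longitude
`Θ = -2π N_d τ`, argument of latitude `u = 2π N_p τ`, inclination `i`, unit radius. -/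
noncomputable def progradeTrajectory (Nd Np : ℕ) (i : ℝ) (τ : ℝ) : ℝ × ℝ × ℝ :=
  let Θ : ℝ := -(2 * π * Nd * τ)
  let u : ℝ := 2 * π * Np * τ
  (Real.cos Θ * Real.cos u - Real.sin Θ * Real.sin u * Real.cos i,
   Real.sin Θ * Real.cos u + Real.cos Θ * Real.sin u * Real.cos i,
   Real.sin u * Real.sin i)

/-- The relative trajectory in a retrograde rotating frame: ascending node longitude
`Θ = 2π N_d τ`, argument of latitude `u = 2π N_p τ`, inclination `i`, unit radius. -/
noncomputable def retrogradeTrajectory (Nd Np : ℕ) (i : ℝ) (τ : ℝ) : ℝ × ℝ × ℝ :=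
  let Θ : ℝ := 2 * π * Nd * τ
  let u : ℝ := 2 * π * Np * τ
  (Real.cos Θ * Real.cos u - Real.sin Θ * Real.sin u * Real.cos i,
   Real.sin Θ * Real.cos u + Real.cos Θ * Real.sin u * Real.cos i,
   Real.sin u * Real.sin i)

private lemma prograde_periodic (Nd Np : ℕ) (i τ : ℝ) :
    progradeTrajectory Nd Np i (τ + 1) = progradeTrajectory Nd Np i τ := by
  unfold progradeTrajectory
  have e1 : -(2*π*(Nd:ℝ)*(τ+1)) = -(2*π*(Nd:ℝ)*τ) + (-(Nd:ℤ) : ℤ) * (2*π) := by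
    push_cast; ring
  have e2 : 2*π*(Np:ℝ)*(τ+1) = 2*π*(Np:ℝ)*τ + ((Np:ℤ) : ℤ) * (2*π) := by
    push_cast; ring
  simp only [e1, e2, Real.cos_add_int_mul_two_pi, Real.sin_add_int_mul_two_pi]

private lemma retrograde_periodic (Nd Np : ℕ) (i τ : ℝ) :
    retrogradeTrajectory Nd Np i (τ + 1) = retrogradeTrajectory Nd Np i τ := by
  unfold retrogradeTrajectory
  have e1 : 2*π*(Nd:ℝ)*(τ+1) = 2*π*(Nd:ℝ)*τ + ((Nd:ℤ) : ℤ) * (2*π) := by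
    push_cast; ring
  have e2 : 2*π*(Np:ℝ)*(τ+1) = 2*π*(Np:ℝ)*τ + ((Np:ℤ) : ℤ) * (2*π) := by
    push_cast; ring
  simp only [e1, e2, Real.cos_add_int_mul_two_pi, Real.sin_add_int_mul_two_pi]

private lemma prograde_self_intersect (Nd Np : ℕ) (hNp : 0 < Np) (i t : ℝ)
    (h : Real.cos i * (Real.sin (2*π*(Nd:ℝ)*t) * Real.cos (2*π*(Np:ℝ)*t))
        - Real.cos (2*π*(Nd:ℝ)*t) * Real.sin (2*π*(Np:ℝ)*t) = 0) :
    progradeTrajectory Nd Np i (1/(4*Np) + t) = progradeTrajectory Nd Np i (1/(4*Np) - t) := by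
  have hNp' : (Np:ℝ) ≠ 0 := by exact_mod_cast hNp.ne'
  unfold progradeTrajectory
  have e1 : 2*π*(Np:ℝ)*(1/(4*Np) + t) = π/2 + 2*π*(Np:ℝ)*t := by field_simp; ring
  have e2 : 2*π*(Np:ℝ)*(1/(4*Np) - t) = π/2 - 2*π*(Np:ℝ)*t := by field_simp; ring
  have e3 : -(2*π*(Nd:ℝ)*(1/(4*Np) + t)) = -(π*(Nd:ℝ)/(2*(Np:ℝ)) + 2*π*(Nd:ℝ)*t) := by
    field_simp; ring
  have e4 : -(2*π*(Nd:ℝ)*(1/(4*Np) - t)) = -(π*(Nd:ℝ)/(2*(Np:ℝ)) - 2*π*(Nd:ℝ)*t) := by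
    field_simp; ring
  simp only [e1, e2, e3, e4, Real.cos_neg, Real.sin_neg, Real.cos_add, Real.sin_add,
    Real.cos_sub, Real.sin_sub, Real.cos_pi_div_two, Real.sin_pi_div_two]
  rw [Prod.mk.injEq, Prod.mk.injEq]
  refine ⟨?_, ?_, ?_⟩
  · linear_combination (2 * Real.cos (π*(Nd:ℝ)/(2*(Np:ℝ)))) * h
  · linear_combination (-2 * Real.sin (π*(Nd:ℝ)/(2*(Np:ℝ)))) * h
  · ring

private lemma retrograde_self_intersect (Nd Np : ℕ) (hNp : 0 < Np) (i t : ℝ)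
    (h : Real.sin (2*π*(Np:ℝ)*t) * Real.cos (2*π*(Nd:ℝ)*t)
        + Real.cos i * (Real.cos (2*π*(Np:ℝ)*t) * Real.sin (2*π*(Nd:ℝ)*t)) = 0) :
    retrogradeTrajectory Nd Np i (1/(4*Np) + t) = retrogradeTrajectory Nd Np i (1/(4*Np) - t) := by
  have hNp' : (Np:ℝ) ≠ 0 := by exact_mod_cast hNp.ne'
  unfold retrogradeTrajectory
  have e1 : 2*π*(Np:ℝ)*(1/(4*Np) + t) = π/2 + 2*π*(Np:ℝ)*t := by field_simp; ring
  have e2 : 2*π*(Np:ℝ)*(1/(4*Np) - t) = π/2 - 2*π*(Np:ℝ)*t := by field_simp; ring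
  have e3 : 2*π*(Nd:ℝ)*(1/(4*Np) + t) = π*(Nd:ℝ)/(2*(Np:ℝ)) + 2*π*(Nd:ℝ)*t := by
    field_simp; ring
  have e4 : 2*π*(Nd:ℝ)*(1/(4*Np) - t) = π*(Nd:ℝ)/(2*(Np:ℝ)) - 2*π*(Nd:ℝ)*t := by
    field_simp; ring
  simp only [e1, e2, e3, e4, Real.cos_neg, Real.sin_neg, Real.cos_add, Real.sin_add,
    Real.cos_sub, Real.sin_sub, Real.cos_pi_div_two, Real.sin_pi_div_two]
  rw [Prod.mk.injEq, Prod.mk.injEq]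
  refine ⟨?_, ?_, ?_⟩
  · linear_combination (-2 * Real.cos (π*(Nd:ℝ)/(2*(Np:ℝ)))) * h
  · linear_combination (-2 * Real.sin (π*(Nd:ℝ)/(2*(Np:ℝ)))) * h
  · ring

/-- Necessity claim inside Theorem 2: if `|N_p - N_d| ≥ 2`, the relative trajectory
self-intersects for every inclination, in both prograde and retrograde frames; hence
`N_p = N_d ± 1` is necessary for a non-self-intersecting relative trajectory. -/
theorem not_injOn_of_two_le_abs_sub (Nd Np : ℕ) (hNd : 0 < Nd) (hNp : 0 < Np)
    (hcop : Nat.Coprime Nd Np) (hK : 2 ≤ |(Np : ℤ) - (Nd : ℤ)|) :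
    ∀ i : ℝ,
      ¬ Set.InjOn (progradeTrajectory Nd Np i) (Set.Ico 0 1) ∧
      ¬ Set.InjOn (retrogradeTrajectory Nd Np i) (Set.Ico 0 1) := by
  intro i
  set K : ℤ := (Np : ℤ) - (Nd : ℤ) with hKdef
  set S : ℤ := (Np : ℤ) + (Nd : ℤ) with hSdef
  have hS : 3 ≤ S := by
    rcases abs_cases K with ⟨he, _⟩ | ⟨he, _⟩ <;> rw [he] at hK <;> omega
  have hKS : |K| ≤ S - 1 := by
    rcases abs_cases K with ⟨he, _⟩ | ⟨he, _⟩ <;> rw [he] <;> omega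
  have hNpr : (0:ℝ) < (Np:ℝ) := by exact_mod_cast hNp
  have hNp1 : (1:ℝ) ≤ (Np:ℝ) := by exact_mod_cast hNp
  have hfrac : 0 < 1/(4*(Np:ℝ)) ∧ 1/(4*(Np:ℝ)) ≤ 1/4 := by
    constructor
    · positivity
    · rw [div_le_div_iff₀ (by linarith) (by norm_num)]
      linarith
  have hKr : (K:ℝ) = (Np:ℝ) - (Nd:ℝ) := by rw [hKdef]; push_cast; ring
  have hSr : (S:ℝ) = (Np:ℝ) + (Nd:ℝ) := by rw [hSdef]; push_cast; ring
  constructor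
  · -- prograde
    intro hInj
    obtain ⟨t, ht0, ht1, hft⟩ :=
      exists_zero_in_half' ((1 + Real.cos i)/2) ((1 - Real.cos i)/2) K S hS hK hKS
    have h : Real.cos i * (Real.sin (2*π*(Nd:ℝ)*t) * Real.cos (2*π*(Np:ℝ)*t))
        - Real.cos (2*π*(Nd:ℝ)*t) * Real.sin (2*π*(Np:ℝ)*t) = 0 := by
      rw [hKr, hSr] at hft
      have eK : 2*π*((Np:ℝ) - (Nd:ℝ))*t = 2*π*(Np:ℝ)*t - 2*π*(Nd:ℝ)*t := by ring
      have eS : 2*π*((Np:ℝ) + (Nd:ℝ))*t = 2*π*(Np:ℝ)*t + 2*π*(Nd:ℝ)*t := by ring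
      rw [eK, eS, Real.sin_sub, Real.sin_add] at hft
      linear_combination -hft
    have heq := prograde_self_intersect Nd Np hNp i t h
    set τ1 : ℝ := 1/(4*(Np:ℝ)) + t with hτ1
    set τ2 : ℝ := 1/(4*(Np:ℝ)) - t with hτ2
    have hm1 : τ1 ∈ Set.Ico (0:ℝ) 1 := by
      constructor
      · rw [hτ1]; linarith [hfrac.1]
      · rw [hτ1]; linarith [hfrac.2]
    rcases le_or_gt 0 τ2 with h2 | h2
    · have hm2 : τ2 ∈ Set.Ico (0:ℝ) 1 := by
        refine ⟨h2, ?_⟩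
        rw [hτ2]; linarith [hfrac.2]
      have := hInj hm1 hm2 heq
      rw [hτ1, hτ2] at this
      linarith
    · have heq2 : progradeTrajectory Nd Np i τ1 = progradeTrajectory Nd Np i (τ2 + 1) := by
        rw [prograde_periodic]; exact heq
      have hm2 : τ2 + 1 ∈ Set.Ico (0:ℝ) 1 := by
        constructor
        · rw [hτ2]; linarith [hfrac.1]
        · linarith
      have := hInj hm1 hm2 heq2
      rw [hτ1, hτ2] at this
      linarith
  · -- retrograde
    intro hInj
    obtain ⟨t, ht0, ht1, hft⟩ :=
      exists_zero_in_half' ((1 - Real.cos i)/2) ((1 + Real.cos i)/2) K S hS hK hKS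
    have h : Real.sin (2*π*(Np:ℝ)*t) * Real.cos (2*π*(Nd:ℝ)*t)
        + Real.cos i * (Real.cos (2*π*(Np:ℝ)*t) * Real.sin (2*π*(Nd:ℝ)*t)) = 0 := by
      rw [hKr, hSr] at hft
      have eK : 2*π*((Np:ℝ) - (Nd:ℝ))*t = 2*π*(Np:ℝ)*t - 2*π*(Nd:ℝ)*t := by ring
      have eS : 2*π*((Np:ℝ) + (Nd:ℝ))*t = 2*π*(Np:ℝ)*t + 2*π*(Nd:ℝ)*t := by ring
      rw [eK, eS, Real.sin_sub, Real.sin_add] at hft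
      linear_combination hft
    have heq := retrograde_self_intersect Nd Np hNp i t h
    set τ1 : ℝ := 1/(4*(Np:ℝ)) + t with hτ1
    set τ2 : ℝ := 1/(4*(Np:ℝ)) - t with hτ2
    have hm1 : τ1 ∈ Set.Ico (0:ℝ) 1 := by
      constructor
      · rw [hτ1]; linarith [hfrac.1]
      · rw [hτ1]; linarith [hfrac.2]
    rcases le_or_gt 0 τ2 with h2 | h2
    · have hm2 : τ2 ∈ Set.Ico (0:ℝ) 1 := by
        refine ⟨h2, ?_⟩
        rw [hτ2]; linarith [hfrac.2]
      have := hInj hm1 hm2 heq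
      rw [hτ1, hτ2] at this
      linarith
    · have heq2 : retrogradeTrajectory Nd Np i τ1 = retrogradeTrajectory Nd Np i (τ2 + 1) := by
        rw [retrograde_periodic]; exact heq
      have hm2 : τ2 + 1 ∈ Set.Ico (0:ℝ) 1 := by
        constructor
        · rw [hτ2]; linarith [hfrac.1]
        · linarith
      have := hInj hm1 hm2 heq2
      rw [hτ1, hτ2] at this
      linarith
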